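/- Let a, b, c, d be pairwise distinct complex numbers with |a| = |b| = |c| = |d| = 1 and ac ≠ bd, and set w2 := (ac(b+d) − bd(a+c))/(ac − bd). Define p1 := ab(c − d)/(ac − bd), p2 := bc(a − d)/(ac − bd), p3 := cd(a − b)/(ac − bd), p4 := ad(c − b)/(ac − bd). Then |p1 − a| = |p1 − b| = |p1 − w2|, |p2 − b| = |p2 − c| = |p2 − w2|, |p3 − c| = |p3 − d| = |p3 − w2|, |p4 − a| = |p4 − d| = |p4 − w2| (so p1, p2, p3, p4 are the centers of the four circles C[a,b,w2], C[b,c,w2], C[c,d,w2], C[a,d,w2] through w2), and p1 + p3 = p2 + p4 = w2. Hence p1, p2, p3, p4 form the vertices of a parallelogram (rhomboid) whose center (p1 + p3)/2 = w2/2 is the euclidean midpoint of the segment [0, w2]. -/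

import Mathlib

open Complex

/-- The centers `p1, p2, p3, p4` of the four circles `C[a,b,w2]`, `C[b,c,w2]`,
`C[c,d,w2]`, `C[a,d,w2]` through `w2` form the vertices of a rhomboid whose center
is the euclidean midpoint of the segment `[0, w2]`. -/
theorem rhomboid_of_circle_centers (a b c d : ℂ)
    (ha : ‖a‖ = 1) (hb : ‖b‖ = 1)
    (hc : ‖c‖ = 1) (hd : ‖d‖ = 1)
    (hab : a ≠ b) (hac : a ≠ c) (had : a ≠ d)
    (hbc : b ≠ c) (hbd : b ≠ d) (hcd : c ≠ d)
    (h2 : a * c ≠ b * d) :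
    let w2 := (a * c * (b + d) - b * d * (a + c)) / (a * c - b * d)
    let p1 := a * b * (c - d) / (a * c - b * d)
    let p2 := b * c * (a - d) / (a * c - b * d)
    let p3 := c * d * (a - b) / (a * c - b * d)
    let p4 := a * d * (c - b) / (a * c - b * d)
    (‖p1 - a‖ = ‖p1 - b‖ ∧
      ‖p1 - b‖ = ‖p1 - w2‖) ∧
    (‖p2 - b‖ = ‖p2 - c‖ ∧
      ‖p2 - c‖ = ‖p2 - w2‖) ∧
    (‖p3 - c‖ = ‖p3 - d‖ ∧
      ‖p3 - d‖ = ‖p3 - w2‖) ∧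
    (‖p4 - a‖ = ‖p4 - d‖ ∧
      ‖p4 - d‖ = ‖p4 - w2‖) ∧
    p1 + p3 = w2 ∧ p2 + p4 = w2 ∧ (p1 + p3) / 2 = w2 / 2 := by
  intro w2 p1 p2 p3 p4
  have hD : a * c - b * d ≠ 0 := sub_ne_zero.mpr h2
  have key : ∀ u v x y : ℂ, ‖u‖ = 1 → ‖v‖ = 1 →
      ‖u * v * (x - y) / (a * c - b * d)‖ =
        ‖x - y‖ / ‖a * c - b * d‖ := by
    intro u v x y hu hv
    simp [norm_div, norm_mul, hu, hv]
  have e1a : p1 - a = a * c * (b - a) / (a * c - b * d) := by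
    simp only [p1]; field_simp; ring
  have e1b : p1 - b = b * d * (b - a) / (a * c - b * d) := by
    simp only [p1]; field_simp; ring
  have e1w : p1 - w2 = c * d * (b - a) / (a * c - b * d) := by
    simp only [p1, w2]; field_simp; ring
  have e2b : p2 - b = b * d * (b - c) / (a * c - b * d) := by
    simp only [p2]; rw [eq_div_iff hD, sub_mul, div_mul_cancel₀ _ hD]; ring
  have e2c : p2 - c = a * c * (b - c) / (a * c - b * d) := by
    simp only [p2]; rw [eq_div_iff hD, sub_mul, div_mul_cancel₀ _ hD]; ring
  have e2w : p2 - w2 = a * d * (b - c) / (a * c - b * d) := by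
    simp only [p2, w2]; field_simp; ring
  have e3c : p3 - c = a * c * (d - c) / (a * c - b * d) := by
    simp only [p3]; rw [eq_div_iff hD, sub_mul, div_mul_cancel₀ _ hD]; ring
  have e3d : p3 - d = b * d * (d - c) / (a * c - b * d) := by
    simp only [p3]; rw [eq_div_iff hD, sub_mul, div_mul_cancel₀ _ hD]; ring
  have e3w : p3 - w2 = a * b * (d - c) / (a * c - b * d) := by
    simp only [p3, w2]; field_simp; ring
  have e4a : p4 - a = a * c * (d - a) / (a * c - b * d) := by
    simp only [p4]; rw [eq_div_iff hD, sub_mul, div_mul_cancel₀ _ hD]; ring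
  have e4d : p4 - d = b * d * (d - a) / (a * c - b * d) := by
    simp only [p4]; rw [eq_div_iff hD, sub_mul, div_mul_cancel₀ _ hD]; ring
  have e4w : p4 - w2 = b * c * (d - a) / (a * c - b * d) := by
    simp only [p4, w2]; field_simp; ring
  have h13 : p1 + p3 = w2 := by
    simp only [p1, p3, w2]; field_simp; ring
  have h24 : p2 + p4 = w2 := by
    simp only [p2, p4, w2]; field_simp; ring
  refine ⟨⟨?_, ?_⟩, ⟨?_, ?_⟩, ⟨?_, ?_⟩, ⟨?_, ?_⟩, h13, h24, by rw [h13]⟩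
  · rw [e1a, e1b, key a c _ _ ha hc, key b d _ _ hb hd]
  · rw [e1b, e1w, key b d _ _ hb hd, key c d _ _ hc hd]
  · rw [e2b, e2c, key b d _ _ hb hd, key a c _ _ ha hc]
  · rw [e2c, e2w, key a c _ _ ha hc, key a d _ _ ha hd]
  · rw [e3c, e3d, key a c _ _ ha hc, key b d _ _ hb hd]
  · rw [e3d, e3w, key b d _ _ hb hd, key a b _ _ ha hb]
  · rw [e4a, e4d, key a c _ _ ha hc, key b d _ _ hb hd]
  · rw [e4d, e4w, key b d _ _ hb hd, key b c _ _ hb hc]
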